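/- Let F be a field of characteristic p > 0, r ≥ 1, and a₁,…,a_r ∈ F such that the r-fold quasi-Pfister form π = ⟪a₁,…,a_r⟫ is anisotropic over F. Inside a fixed algebraic closure of F let αᵢ satisfy αᵢ^p = aᵢ, and set K = F(α₁,…,α_r). Then for every diagonal quasilinear p-form φ = ⟨c₁,…,c_m⟩ anisotropic over F, i_d((φ ⊗ π)_F) = p^r · i_d(φ_K), where φ ⊗ π is the diagonal form of dimension m·p^r with coefficients c_j · a₁^{i₁}···a_r^{i_r} for all 1 ≤ j ≤ m and all tuples (i₁,…,i_r) with 0 ≤ i_t ≤ p−1. -/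

import Mathlib

open scoped BigOperators

set_option synthInstance.maxHeartbeats 1000000
set_option maxHeartbeats 1000000

/-- The subfield `F^p` of `p`-th powers of `F` (generated as a subfield). -/
def pPow (p : ℕ) (F : Type*) [Field F] : Subfield F :=
  Subfield.closure (Set.range fun x : F => x ^ p)

/-- The degree `[F^p(S) : F^p]`. -/
noncomputable def pDeg (p : ℕ) {F : Type*} [Field F] (S : Set F) : ℕ :=
  Module.finrank ↥(pPow p F) ↥(IntermediateField.adjoin ↥(pPow p F) S)

/-- A finite family `a : ι → F` is `p`-independent over `F` if
`[F^p(a i, i : ι) : F^p] = p ^ #ι`. -/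
def pIndep (p : ℕ) {F : Type*} [Field F] {ι : Type*} [Fintype ι] (a : ι → F) : Prop :=
  pDeg p (Set.range a) = p ^ Fintype.card ι

/-- The defect `i_d(φ_E)` of the diagonal quasilinear `p`-form with coefficients `a` over `E`:
the `E`-dimension of its zero set (an `E`-subspace in characteristic `p`). -/
noncomputable def defect (p : ℕ) (E : Type*) [Field E] {ι : Type*} [Fintype ι] (a : ι → E) : ℕ :=
  Module.finrank E ↥(Submodule.span E {x : ι → E | ∑ i, a i * x i ^ p = 0})

/-- A diagonal quasilinear `p`-form is anisotropic over `E`. -/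
def Anisotropic (p : ℕ) (E : Type*) [Field E] {ι : Type*} [Fintype ι] (a : ι → E) : Prop :=
  ∀ x : ι → E, ∑ i, a i * x i ^ p = 0 → x = 0

/-- The value set `D_E(φ)` of a diagonal quasilinear `p`-form. -/
def valueSet (p : ℕ) (E : Type*) [Field E] {ι : Type*} [Fintype ι] (a : ι → E) : Set E :=
  {y | ∃ x : ι → E, y = ∑ i, a i * x i ^ p}

/-- Auxiliary: the zero set of a diagonal quasilinear `p`-form over a field of
characteristic `p` is an `E`-submodule. -/
def zeroSubmoduleAux (p : ℕ) [Fact p.Prime] (E : Type*) [Field E] [CharP E p]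
    {ι : Type*} [Fintype ι] (a : ι → E) : Submodule E (ι → E) where
  carrier := {x : ι → E | ∑ i, a i * x i ^ p = 0}
  zero_mem' := by
    simp [zero_pow (Fact.out : p.Prime).ne_zero]
  add_mem' := by
    intro x y hx hy
    simp only [Set.mem_setOf_eq, Pi.add_apply] at *
    have h : ∀ i ∈ Finset.univ, a i * (x i + y i) ^ p = a i * x i ^ p + a i * y i ^ p := by
      intro i _
      rw [add_pow_char, mul_add]
    rw [Finset.sum_congr rfl h, Finset.sum_add_distrib, hx, hy, add_zero]
  smul_mem' := by
    intro t x hx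
    simp only [Set.mem_setOf_eq, Pi.smul_apply, smul_eq_mul] at *
    have h : ∀ i ∈ Finset.univ, a i * (t * x i) ^ p = t ^ p * (a i * x i ^ p) := by
      intro i _
      rw [mul_pow]; ring
    rw [Finset.sum_congr rfl h, ← Finset.mul_sum, hx, mul_zero]

lemma mem_zeroSubmoduleAux (p : ℕ) [Fact p.Prime] (E : Type*) [Field E] [CharP E p]
    {ι : Type*} [Fintype ι] (a : ι → E) (x : ι → E) :
    x ∈ zeroSubmoduleAux p E a ↔ ∑ i, a i * x i ^ p = 0 := Iff.rfl

lemma defect_eq_zeroSubmoduleAux (p : ℕ) [Fact p.Prime] (E : Type*) [Field E] [CharP E p]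
    {ι : Type*} [Fintype ι] (a : ι → E) :
    defect p E a = Module.finrank E ↥(zeroSubmoduleAux p E a) := by
  unfold defect
  rw [show {x : ι → E | ∑ i, a i * x i ^ p = 0} = (zeroSubmoduleAux p E a : Set (ι → E)) from rfl,
    Submodule.span_eq]

/-- Theorem: if `π = ⟪a₁,…,a_r⟫` is anisotropic and `K = F(α₁,…,α_r)` with `αᵢ^p = aᵢ`,
then `i_d(φ ⊗ π) = p^r · i_d(φ_K)` for every anisotropic `φ` over `F`. -/
theorem defect_tensor_pfister_eq_pow_mul_defect (p : ℕ) [Fact p.Prime]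
    (F : Type*) [Field F] [CharP F p]
    (r : ℕ) (hr : 1 ≤ r) (a : Fin r → F)
    (hπ : Anisotropic p F (fun i : Fin r → Fin p => ∏ t, a t ^ (i t : ℕ)))
    (α : Fin r → AlgebraicClosure F)
    (hα : ∀ i, α i ^ p = algebraMap F (AlgebraicClosure F) (a i))
    (m : ℕ) (c : Fin m → F) (hc : Anisotropic p F c) :
    defect p F (fun j : Fin m × (Fin r → Fin p) => c j.1 * ∏ t, a t ^ (j.2 t : ℕ)) =
      p ^ r * defect p ↥(IntermediateField.adjoin F (Set.range α))
        (fun i => algebraMap F ↥(IntermediateField.adjoin F (Set.range α)) (c i)) := by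
  classical
  have hp : p.Prime := Fact.out
  haveI : NeZero p := ⟨hp.ne_zero⟩
  set K := IntermediateField.adjoin F (Set.range α) with hK
  haveI : CharP K p := charP_of_injective_algebraMap (algebraMap F K).injective p
  have hmem : ∀ i, α i ∈ K := fun i => IntermediateField.subset_adjoin F _ ⟨i, rfl⟩
  set α' : Fin r → K := fun i => ⟨α i, hmem i⟩ with hα'def
  have hα' : ∀ i, α' i ^ p = algebraMap F K (a i) := by
    intro i
    apply Subtype.ext
    push_cast
    rw [hα i]
  set b : (Fin r → Fin p) → K := fun i => ∏ t, α' t ^ (i t : ℕ) with hbdef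
  have hbpow : ∀ i, b i ^ p = algebraMap F K (∏ t, a t ^ (i t : ℕ)) := by
    intro i
    rw [hbdef]
    simp only
    rw [← Finset.prod_pow, map_prod]
    refine Finset.prod_congr rfl fun t _ => ?_
    rw [← pow_mul, mul_comm ((i t : ℕ)) p, pow_mul, hα', map_pow]
  -- linear independence of the monomial family
  have hli : LinearIndependent F b := by
    rw [Fintype.linearIndependent_iff]
    intro g hg
    have h2 : (∑ i, g i • b i) ^ p = 0 := by rw [hg]; exact zero_pow hp.ne_zero
    rw [sum_pow_char] at h2
    have h3 : ∀ i ∈ Finset.univ, (g i • b i) ^ p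
        = algebraMap F K ((∏ t, a t ^ (i t : ℕ)) * g i ^ p) := by
      intro i _
      rw [Algebra.smul_def, mul_pow, hbpow, ← map_pow, ← map_mul, mul_comm]
    rw [Finset.sum_congr rfl h3, ← map_sum] at h2
    have h4 : (∑ i : Fin r → Fin p, (∏ t, a t ^ (i t : ℕ)) * g i ^ p) = 0 :=
      (map_eq_zero_iff _ (algebraMap F K).injective).mp h2
    have := hπ g h4
    intro i; exact congrFun this i
  -- spanning
  set W : Submodule F (AlgebraicClosure F) :=
    Submodule.span F (Set.range fun i : Fin r → Fin p => ∏ t, α t ^ (i t : ℕ)) with hWdef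
  have hβmem : ∀ i : Fin r → Fin p, (∏ t, α t ^ (i t : ℕ)) ∈ W :=
    fun i => Submodule.subset_span ⟨i, rfl⟩
  have h1W : (1 : AlgebraicClosure F) ∈ W := by
    have := hβmem (fun _ => 0)
    simpa using this
  have hαW : ∀ t, α t ∈ W := by
    intro t
    have hh := hβmem (fun s => if s = t then 1 else 0)
    have he : (∏ s, α s ^ (Fin.val (if s = t then (1:Fin p) else 0))) = α t := by
      rw [Finset.prod_eq_single t]
      · simp [Fin.val_one', Nat.mod_eq_of_lt hp.one_lt]
      · intro s _ hs; simp [hs]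
      · simp
    rwa [he] at hh
  have hpowred : ∀ (t : Fin r) (n : ℕ),
      α t ^ n = algebraMap F (AlgebraicClosure F) (a t ^ (n / p)) * α t ^ (n % p) := by
    intro t n
    conv_lhs => rw [← Nat.div_add_mod n p]
    rw [pow_add, pow_mul, hα, map_pow]
  have hkeymul : ∀ i j : Fin r → Fin p,
      (∏ t, α t ^ (i t : ℕ)) * (∏ t, α t ^ (j t : ℕ)) ∈ W := by
    intro i j
    have heq : (∏ t, α t ^ (i t : ℕ)) * (∏ t, α t ^ (j t : ℕ))
        = algebraMap F (AlgebraicClosure F) (∏ t, a t ^ (((i t : ℕ) + (j t : ℕ)) / p)) *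
          ∏ t, α t ^ ((((i t : ℕ) + (j t : ℕ)) % p)) := by
      rw [← Finset.prod_mul_distrib, map_prod, ← Finset.prod_mul_distrib]
      refine Finset.prod_congr rfl fun t _ => ?_
      rw [← pow_add, hpowred t ((i t : ℕ) + (j t : ℕ))]
    rw [heq, ← Algebra.smul_def]
    exact W.smul_mem _ (hβmem (fun t => ⟨((i t : ℕ) + (j t : ℕ)) % p, Nat.mod_lt _ hp.pos⟩))
  have hWW : ∀ x ∈ W, ∀ y ∈ W, x * y ∈ W := by
    have hle : W * W ≤ W := by
      rw [hWdef, Submodule.span_mul_span, Submodule.span_le]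
      rintro z ⟨x, ⟨i, rfl⟩, y, ⟨j, rfl⟩, rfl⟩
      exact hkeymul i j
    exact fun x hx y hy => hle (Submodule.mul_mem_mul hx hy)
  have halg : ∀ x ∈ Set.range α, IsAlgebraic F x := fun x _ => Algebra.IsAlgebraic.isAlgebraic x
  have hsubalg : K.toSubalgebra = Algebra.adjoin F (Set.range α) :=
    IntermediateField.adjoin_toSubalgebra_of_isAlgebraic halg
  have hKW0 : ∀ x : AlgebraicClosure F, x ∈ Algebra.adjoin F (Set.range α) → x ∈ W := by
    intro x hx
    induction hx using Algebra.adjoin_induction with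
    | mem z hz => obtain ⟨t, rfl⟩ := hz; exact hαW t
    | algebraMap s => rw [Algebra.algebraMap_eq_smul_one]; exact W.smul_mem _ h1W
    | add x y _ _ hx hy => exact W.add_mem hx hy
    | mul x y _ _ hx hy => exact hWW _ hx _ hy
  have hKW : ∀ x : AlgebraicClosure F, x ∈ K → x ∈ W := fun x hx =>
    hKW0 x (by rw [← hsubalg]; exact hx)
  have hspan : ⊤ ≤ Submodule.span F (Set.range b) := by
    rintro x -
    have hx : (x : AlgebraicClosure F) ∈ W := hKW x x.2
    have hmap : Submodule.map (K.val.toLinearMap) (Submodule.span F (Set.range b)) = W := by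
      rw [Submodule.map_span, hWdef]
      congr 1
      rw [← Set.range_comp]
      refine congrArg Set.range (funext fun i => ?_)
      simp [hbdef, map_prod, hα'def]
    rw [← hmap] at hx
    obtain ⟨y, hy, hxy⟩ := hx
    have hyx : y = x := Subtype.ext hxy
    rwa [← hyx]
  let bK : Module.Basis (Fin r → Fin p) F K := Module.Basis.mk hli hspan
  have hfinrank : Module.finrank F K = p ^ r := by
    rw [Module.finrank_eq_card_basis bK]
    simp
  -- the linear equivalence
  let B : Module.Basis (Fin m × (Fin r → Fin p)) F (Fin m → K) :=
    (Pi.basis fun _ : Fin m => bK).reindex (Equiv.sigmaEquivProd (Fin m) (Fin r → Fin p))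
  have hB : ∀ (j : Fin m) (i : Fin r → Fin p), B (j, i) = Pi.single j (bK i) := by
    intro j i
    simp [B, Module.Basis.reindex_apply, Pi.basis_apply]
  have hΦ : ∀ (x : Fin m × (Fin r → Fin p) → F) (j : Fin m),
      (B.equivFun.symm x) j = ∑ i : Fin r → Fin p, x (j, i) • bK i := by
    intro x j
    rw [Module.Basis.equivFun_symm_apply, Finset.sum_apply, Fintype.sum_prod_type,
      Finset.sum_eq_single j]
    · refine Finset.sum_congr rfl fun i _ => ?_
      rw [Pi.smul_apply, hB, Pi.single_eq_same]
    · intro j' _ hj'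
      refine Finset.sum_eq_zero fun i _ => ?_
      rw [Pi.smul_apply, hB, Pi.single_eq_of_ne (Ne.symm hj'), smul_zero]
    · intro h; exact absurd (Finset.mem_univ j) h
  have hkey : ∀ x : Fin m × (Fin r → Fin p) → F,
      (∑ j, algebraMap F K (c j) * (B.equivFun.symm x j) ^ p)
        = algebraMap F K
          (∑ ji : Fin m × (Fin r → Fin p), (c ji.1 * ∏ t, a t ^ ((ji.2 t : ℕ))) * x ji ^ p) := by
    intro x
    rw [map_sum, Fintype.sum_prod_type]
    refine Finset.sum_congr rfl fun j _ => ?_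
    have hbKpow : ∀ i, bK i ^ p = algebraMap F K (∏ t, a t ^ (i t : ℕ)) := by
      intro i
      rw [show bK i = b i from by simp [bK, Module.Basis.mk_apply], hbpow]
    rw [hΦ, sum_pow_char, Finset.mul_sum]
    refine Finset.sum_congr rfl fun i _ => ?_
    rw [Algebra.smul_def, mul_pow, hbKpow, ← map_pow, ← map_mul, ← map_mul]
    congr 1
    ring
  -- zero-set submodules
  set S1 : Submodule F (Fin m × (Fin r → Fin p) → F) :=
    zeroSubmoduleAux p F (fun j : Fin m × (Fin r → Fin p) => c j.1 * ∏ t, a t ^ ((j.2 t : ℕ)))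
    with hS1def
  set S2 : Submodule K (Fin m → K) := zeroSubmoduleAux p K (fun i => algebraMap F K (c i))
    with hS2def
  rw [defect_eq_zeroSubmoduleAux, defect_eq_zeroSubmoduleAux, ← hS1def, ← hS2def]
  have hScomap : S1 = Submodule.comap (B.equivFun.symm : _ →ₗ[F] _)
      (S2.restrictScalars F) := by
    ext x
    rw [Submodule.mem_comap, Submodule.restrictScalars_mem, LinearEquiv.coe_coe,
      hS1def, hS2def, mem_zeroSubmoduleAux, mem_zeroSubmoduleAux, hkey x,
      map_eq_zero_iff _ (algebraMap F K).injective]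
  have e1 : Module.finrank F S1 = Module.finrank F (S2.restrictScalars F) := by
    rw [hScomap, Submodule.comap_equiv_eq_map_symm]
    exact LinearEquiv.finrank_map_eq _ _
  have e2 : Module.finrank F (S2.restrictScalars F) = Module.finrank F S2 :=
    LinearEquiv.finrank_eq
      { toFun := fun x => ⟨x.1, x.2⟩, invFun := fun x => ⟨x.1, x.2⟩,
        map_add' := fun _ _ => rfl, map_smul' := fun _ _ => rfl,
        left_inv := fun _ => rfl, right_inv := fun _ => rfl }
  have e3 : Module.finrank F ↥S2 = Module.finrank F ↥K * Module.finrank K ↥S2 :=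
    (Module.finrank_mul_finrank F K ↥S2).symm
  rw [e1, e2, e3, hfinrank]
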